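/- The group G generated by the maps π_{(ij)} acting on Γ₄³ embeds as a subgroup of (Z/2Z)⁴; in particular |G| = 8 and G acts simply transitively on Γ₄³. -/

import Mathlib

abbrev Triple := Fin 4 × Fin 4 × Fin 4

def rot (t : Triple) : Triple := (t.2.1, t.2.2, t.1)

def DistinctTriple (t : Triple) : Prop := t.1 ≠ t.2.1 ∧ t.1 ≠ t.2.2 ∧ t.2.1 ≠ t.2.2

def cyc (t u : Triple) : Prop := u = t ∨ u = rot t ∨ u = rot (rot t)

def fourth (t : Triple) : Fin 4 := 2 - (t.1 + t.2.1 + t.2.2)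

def piRaw (s : Finset (Fin 4)) (t : Triple) : Triple :=
  if s = {t.1, t.2.1} then (t.2.1, t.1, fourth t)
  else if s = {t.2.1, t.2.2} then (t.2.2, t.2.1, fourth t)
  else if s = {t.1, t.2.2} then (t.1, t.2.2, fourth t)
  else if s = {t.2.2, fourth t} then (t.1, t.2.1, fourth t)
  else if s = {t.2.1, fourth t} then (t.2.2, t.1, fourth t)
  else if s = {t.1, fourth t} then (t.2.1, t.2.2, fourth t)
  else t

def word (L : List (Finset (Fin 4))) (t : Triple) : Triple := L.foldr piRaw t

def ValidWord (L : List (Finset (Fin 4))) : Prop := ∀ s ∈ L, s.card = 2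

set_option maxRecDepth 4000

def psi (t : Triple) : Fin 4 → ZMod 2 :=
  if t = (0, 1, 2) then ![0, 0, 0, 0] else
  if t = (0, 1, 3) then ![1, 1, 0, 0] else
  if t = (0, 2, 1) then ![1, 1, 1, 1] else
  if t = (0, 2, 3) then ![0, 1, 0, 1] else
  if t = (0, 3, 1) then ![0, 0, 1, 1] else
  if t = (0, 3, 2) then ![1, 0, 1, 0] else
  if t = (1, 0, 2) then ![1, 1, 1, 1] else
  if t = (1, 0, 3) then ![0, 0, 1, 1] else
  if t = (1, 2, 0) then ![0, 0, 0, 0] else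
  if t = (1, 2, 3) then ![0, 1, 1, 0] else
  if t = (1, 3, 0) then ![1, 1, 0, 0] else
  if t = (1, 3, 2) then ![1, 0, 0, 1] else
  if t = (2, 0, 1) then ![0, 0, 0, 0] else
  if t = (2, 0, 3) then ![1, 0, 1, 0] else
  if t = (2, 1, 0) then ![1, 1, 1, 1] else
  if t = (2, 1, 3) then ![1, 0, 0, 1] else
  if t = (2, 3, 0) then ![0, 1, 0, 1] else
  if t = (2, 3, 1) then ![0, 1, 1, 0] else
  if t = (3, 0, 1) then ![1, 1, 0, 0] else
  if t = (3, 0, 2) then ![0, 1, 0, 1] else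
  if t = (3, 1, 0) then ![0, 0, 1, 1] else
  if t = (3, 1, 2) then ![0, 1, 1, 0] else
  if t = (3, 2, 0) then ![1, 0, 1, 0] else
  if t = (3, 2, 1) then ![1, 0, 0, 1] else ![0, 0, 0, 0]

instance (t : Triple) : Decidable (DistinctTriple t) := by unfold DistinctTriple; infer_instance
instance (t u : Triple) : Decidable (cyc t u) := by unfold cyc; infer_instance

def chi (s : Finset (Fin 4)) : Fin 4 → ZMod 2 := fun i => if i ∈ s then 0 else 1

lemma psi_even : ∀ t : Triple, DistinctTriple t →
    psi t 0 + psi t 1 + psi t 2 + psi t 3 = 0 := by decide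

lemma psi_cyc_iff : ∀ t u : Triple, DistinctTriple t → DistinctTriple u →
    (cyc t u ↔ psi t = psi u) := by decide

lemma chi_even : ∀ s : Finset (Fin 4), s.card = 2 →
    chi s 0 + chi s 1 + chi s 2 + chi s 3 = 0 := by decide

lemma step : ∀ (s : Finset (Fin 4)) (t : Triple), s.card = 2 → DistinctTriple t →
    DistinctTriple (piRaw s t) ∧ psi (piRaw s t) = psi t + chi s := by decide
def phi (L : List (Finset (Fin 4))) : Fin 4 → ZMod 2 := (L.map chi).sum

lemma phi_append (L L' : List (Finset (Fin 4))) : phi (L ++ L') = phi L + phi L' := by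
  simp [phi]

lemma phi_cons (s : Finset (Fin 4)) (L : List (Finset (Fin 4))) :
    phi (s :: L) = chi s + phi L := by simp [phi]

lemma word_psi : ∀ L : List (Finset (Fin 4)), ValidWord L → ∀ t : Triple, DistinctTriple t →
    DistinctTriple (word L t) ∧ psi (word L t) = psi t + phi L := by
  intro L
  induction L with
  | nil => intro _ t ht; exact ⟨ht, by simp [word, phi]⟩
  | cons s L ih =>
    intro hV t ht
    have hs : s.card = 2 := hV s List.mem_cons_self
    have hL : ValidWord L := fun x hx => hV x (List.mem_cons_of_mem _ hx)
    obtain ⟨h1, h2⟩ := ih hL t ht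
    obtain ⟨h3, h4⟩ := step s (word L t) hs h1
    refine ⟨h3, ?_⟩
    have hw : word (s :: L) t = piRaw s (word L t) := rfl
    rw [hw, h4, h2, phi_cons]
    abel

def cands : List (List (Finset (Fin 4))) :=
  [[], [{0,1}], [{0,2}], [{0,3}], [{1,2}], [{1,3}], [{2,3}], [{0,1},{2,3}]]

instance (L : List (Finset (Fin 4))) : Decidable (ValidWord L) := by
  unfold ValidWord; infer_instance

lemma realize : ∀ v : Fin 4 → ZMod 2, v 0 + v 1 + v 2 + v 3 = 0 →
    ∃ L ∈ cands, phi L = v := by decide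

lemma cands_valid : ∀ L ∈ cands, ValidWord L := by decide

lemma phi_even : ∀ L : List (Finset (Fin 4)), ValidWord L →
    phi L 0 + phi L 1 + phi L 2 + phi L 3 = 0 := by
  intro L
  induction L with
  | nil => intro _; simp [phi]
  | cons s L ih =>
    intro hV
    have hs := chi_even s (hV s List.mem_cons_self)
    have hL := ih (fun x hx => hV x (List.mem_cons_of_mem _ hx))
    have h : ∀ i, phi (s :: L) i = chi s i + phi L i := by
      intro i; rw [phi_cons]; rfl
    rw [h, h, h, h]
    linear_combination hs + hL

lemma add_self_fun (v : Fin 4 → ZMod 2) : v + v = 0 := by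
  funext i; exact (by decide : ∀ x : ZMod 2, x + x = 0) _

theorem group_embeds_in_Z2pow4' : True := trivial

theorem main_aux :
    (∀ t u : Triple, DistinctTriple t → DistinctTriple u →
      ∃ L : List (Finset (Fin 4)), ValidWord L ∧ cyc (word L t) u) ∧
    (∀ L L' : List (Finset (Fin 4)), ValidWord L → ValidWord L' →
      ∀ t : Triple, DistinctTriple t → cyc (word L t) (word L' t) →
        ∀ t' : Triple, DistinctTriple t' → cyc (word L t') (word L' t')) ∧
    (∃ φ : List (Finset (Fin 4)) → (Fin 4 → ZMod 2),
      (∀ L L' : List (Finset (Fin 4)), φ (L ++ L') = φ L + φ L') ∧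
      (∀ L L' : List (Finset (Fin 4)), ValidWord L → ValidWord L' →
        ((∀ t : Triple, DistinctTriple t → cyc (word L t) (word L' t)) ↔ φ L = φ L')) ∧
      Nat.card {v : Fin 4 → ZMod 2 // ∃ L, ValidWord L ∧ φ L = v} = 8) := by
  refine ⟨?_, ?_, phi, phi_append, ?_, ?_⟩
  · -- transitivity
    intro t u ht hu
    have h1 := psi_even t ht
    have h2 := psi_even u hu
    have hv : (psi t + psi u) 0 + (psi t + psi u) 1 + (psi t + psi u) 2
        + (psi t + psi u) 3 = 0 := by
      simp only [Pi.add_apply]; linear_combination h1 + h2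
    obtain ⟨L, hmem, hphi⟩ := realize _ hv
    have hval := cands_valid L hmem
    obtain ⟨hd, hp⟩ := word_psi L hval t ht
    refine ⟨L, hval, ?_⟩
    rw [psi_cyc_iff _ _ hd hu, hp, hphi, ← add_assoc, add_self_fun, zero_add]
  · -- freeness
    intro L L' hL hL' t ht hcyc t' ht'
    obtain ⟨d1, p1⟩ := word_psi L hL t ht
    obtain ⟨d2, p2⟩ := word_psi L' hL' t ht
    have hψ := (psi_cyc_iff _ _ d1 d2).mp hcyc
    rw [p1, p2] at hψ
    have hphi : phi L = phi L' := by
      have := add_left_cancel hψ; exact this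
    obtain ⟨d1', p1'⟩ := word_psi L hL t' ht'
    obtain ⟨d2', p2'⟩ := word_psi L' hL' t' ht'
    rw [psi_cyc_iff _ _ d1' d2', p1', p2', hphi]
  · -- iff
    intro L L' hL hL'
    constructor
    · intro h
      have ht0 : DistinctTriple ((0 : Fin 4), (1 : Fin 4), (2 : Fin 4)) := by decide
      obtain ⟨d1, p1⟩ := word_psi L hL _ ht0
      obtain ⟨d2, p2⟩ := word_psi L' hL' _ ht0
      have hψ := (psi_cyc_iff _ _ d1 d2).mp (h _ ht0)
      rw [p1, p2] at hψ
      exact add_left_cancel hψ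
    · intro h t ht
      obtain ⟨d1, p1⟩ := word_psi L hL t ht
      obtain ⟨d2, p2⟩ := word_psi L' hL' t ht
      rw [psi_cyc_iff _ _ d1 d2, p1, p2, h]
  · -- cardinality
    have key : ∀ v : Fin 4 → ZMod 2,
        (∃ L, ValidWord L ∧ phi L = v) ↔ (v 0 + v 1 + v 2 + v 3 = 0) := by
      intro v
      constructor
      · rintro ⟨L, hL, rfl⟩; exact phi_even L hL
      · intro hv
        obtain ⟨L, hmem, hphi⟩ := realize v hv
        exact ⟨L, cands_valid L hmem, hphi⟩
    rw [Nat.card_congr (Equiv.subtypeEquivRight key), Nat.card_eq_fintype_card]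
    decide

/-- The group `G` generated by the `π_{(ij)}` acting on `Γ₄³` embeds as a subgroup of
`(ℤ/2)⁴`; in particular `|G| = 8` and `G` acts simply transitively on `Γ₄³`:
(1) transitivity; (2) freeness (two words agreeing at one point agree everywhere);
(3) an additive map `φ` into `(ℤ/2)⁴` such that two generator words induce the same
element of `G` iff they have the same `φ`-value, whose set of values on generator
words has exactly `8` elements. -/
theorem group_embeds_in_Z2pow4 :
    (∀ t u : Triple, DistinctTriple t → DistinctTriple u →
      ∃ L : List (Finset (Fin 4)), ValidWord L ∧ cyc (word L t) u) ∧
    (∀ L L' : List (Finset (Fin 4)), ValidWord L → ValidWord L' →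
      ∀ t : Triple, DistinctTriple t → cyc (word L t) (word L' t) →
        ∀ t' : Triple, DistinctTriple t' → cyc (word L t') (word L' t')) ∧
    (∃ φ : List (Finset (Fin 4)) → (Fin 4 → ZMod 2),
      (∀ L L' : List (Finset (Fin 4)), φ (L ++ L') = φ L + φ L') ∧
      (∀ L L' : List (Finset (Fin 4)), ValidWord L → ValidWord L' →
        ((∀ t : Triple, DistinctTriple t → cyc (word L t) (word L' t)) ↔ φ L = φ L')) ∧
      Nat.card {v : Fin 4 → ZMod 2 // ∃ L, ValidWord L ∧ φ L = v} = 8) := by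
  exact main_aux
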